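/- Let L: R^d → R be convex and twice differentiable, λ > 0, and β̂ a minimizer of L(β) + λ‖β‖_1. Let β* have support S with |S| ≤ s. Suppose ‖∇L(β*)‖_∞ ≤ λ/2 and suppose the restricted strong convexity bound (β̂ − β*)^T ∇²L(ξ)(β̂ − β*) ≥ (c κ/(2s))·‖β̂_S − β*_S‖_1² holds along the segment between β* and β̂ for some constant c ∈ (0,1]. Then ‖β̂ − β*‖_1 ≤ 48 s λ/(c κ). -/

import Mathlib

set_option maxHeartbeats 1000000


/-- Deterministic ℓ₁ error bound for the Lasso: if `β̂` minimizes `L(β) + lam ‖β‖₁` for a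
convex twice-differentiable `L`, `β*` is supported on `S` with `|S| ≤ s`,
`‖∇L(β*)‖_∞ ≤ lam/2`, and restricted strong convexity
`Δᵀ ∇²L(ξ) Δ ≥ (cκ/(2s)) ‖Δ_S‖₁²` (with `Δ = β̂ − β*`) holds along the segment between
`β*` and `β̂`, then `‖β̂ − β*‖₁ ≤ 48 s lam / (c κ)`. -/
theorem stmt_11 (d s : ℕ) (hs : 1 ≤ s) (L : (Fin d → ℝ) → ℝ) (lam c κ : ℝ)
    (hlam : 0 < lam) (hκ : 0 < κ) (hc : c ∈ Set.Ioc (0 : ℝ) 1)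
    (hconv : ConvexOn ℝ Set.univ L) (hC2 : ContDiff ℝ 2 L)
    (βhat βstar : Fin d → ℝ) (S : Finset (Fin d)) (hS : S.card ≤ s)
    (hsupp : ∀ j ∉ S, βstar j = 0)
    (hmin : ∀ β : Fin d → ℝ,
      L βhat + lam * ∑ i, |βhat i| ≤ L β + lam * ∑ i, |β i|)
    (hgrad : ∀ i, |fderiv ℝ L βstar (Pi.single i 1)| ≤ lam / 2)
    (hRSC : ∀ ξ ∈ segment ℝ βstar βhat,
      (c * κ / (2 * s)) * (∑ i ∈ S, |βhat i - βstar i|) ^ 2 ≤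
        fderiv ℝ (fderiv ℝ L) ξ (βhat - βstar) (βhat - βstar)) :
    ∑ i, |βhat i - βstar i| ≤ 48 * s * lam / (c * κ) := by
  classical
  set Δ : Fin d → ℝ := βhat - βstar with hΔ
  set a : ℝ := ∑ i ∈ S, |βhat i - βstar i| with ha_def
  set b : ℝ := ∑ i ∈ Sᶜ, |βhat i - βstar i| with hb_def
  set m : ℝ := (c * κ / (2 * s)) * a ^ 2 with hm_def
  have hs0 : (0:ℝ) < s := by exact_mod_cast hs
  have hcκ : (0:ℝ) < c * κ := mul_pos hc.1 hκ
  have ha : 0 ≤ a := Finset.sum_nonneg fun i _ => abs_nonneg _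
  have hb : 0 ≤ b := Finset.sum_nonneg fun i _ => abs_nonneg _
  have hm : 0 ≤ m := by positivity
  have hT : ∑ i, |βhat i - βstar i| = a + b := by
    rw [ha_def, hb_def, Finset.sum_add_sum_compl]
  -- derivatives
  have hL : Differentiable ℝ L := hC2.differentiable (by norm_num)
  have hF : ContDiff ℝ 1 (fderiv ℝ L) := hC2.fderiv_right (by norm_num)
  set φ : ℝ → (Fin d → ℝ) := fun t => βstar + t • Δ with hφdef
  have hφ : ∀ t : ℝ, HasDerivAt φ Δ t := by
    intro t
    exact (((hasDerivAt_id' t).smul_const Δ).const_add βstar).congr_deriv (one_smul ℝ Δ)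
  set D : ℝ → ℝ := fun t => fderiv ℝ L (φ t) Δ with hDdef
  set H : ℝ → ℝ := fun t => fderiv ℝ (fderiv ℝ L) (φ t) Δ Δ with hHdef
  have hg : ∀ t : ℝ, HasDerivAt (fun t => L (φ t)) (D t) t := by
    intro t
    exact (hL (φ t)).hasFDerivAt.comp_hasDerivAt t (hφ t)
  have hD : ∀ t : ℝ, HasDerivAt D (H t) t := by
    intro t
    have h1 : HasDerivAt (fun t => fderiv ℝ L (φ t)) (fderiv ℝ (fderiv ℝ L) (φ t) Δ) t :=
      ((hF.differentiable (by norm_num)) (φ t)).hasFDerivAt.comp_hasDerivAt t (hφ t)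
    have := h1.clm_apply (hasDerivAt_const t Δ)
    simpa using this
  -- segment membership
  have hseg : ∀ t ∈ Set.Icc (0:ℝ) 1, φ t ∈ segment ℝ βstar βhat := by
    intro t ht
    rw [segment_eq_image']
    exact ⟨t, ht, rfl⟩
  have hH_ge : ∀ t ∈ Set.Icc (0:ℝ) 1, m ≤ H t := fun t ht => hRSC (φ t) (hseg t ht)
  -- h := D - D 0 - m t is nonneg on [0,1]
  set h : ℝ → ℝ := fun t => D t - D 0 - m * t with hhdef
  have hh : ∀ t : ℝ, HasDerivAt h (H t - m) t := by
    intro t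
    have h2 : HasDerivAt (fun t : ℝ => m * t) m t := by
      simpa using (hasDerivAt_id t).const_mul m
    exact ((hD t).sub_const (D 0)).sub h2
  have hhdiff : Differentiable ℝ h := fun t => (hh t).differentiableAt
  have hhmono : MonotoneOn h (Set.Icc 0 1) := by
    apply monotoneOn_of_deriv_nonneg (convex_Icc 0 1) hhdiff.continuous.continuousOn
      hhdiff.differentiableOn
    intro x hx
    rw [interior_Icc] at hx
    rw [(hh x).deriv]
    have := hH_ge x ⟨hx.1.le, hx.2.le⟩
    linarith
  have hhnonneg : ∀ t ∈ Set.Icc (0:ℝ) 1, 0 ≤ h t := by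
    intro t ht
    have h0 : h 0 = 0 := by simp [hhdef]
    have := hhmono (Set.left_mem_Icc.2 zero_le_one) ht ht.1
    rw [h0] at this; exact this
  -- k := g - D 0 * t - m/2 t² monotone on [0,1]
  set k : ℝ → ℝ := fun t => L (φ t) - D 0 * t - m / 2 * t ^ 2 with hkdef
  have hk : ∀ t : ℝ, HasDerivAt k (h t) t := by
    intro t
    have h2 : HasDerivAt (fun t : ℝ => D 0 * t) (D 0) t := by
      simpa using (hasDerivAt_id t).const_mul (D 0)
    have h3 : HasDerivAt (fun t : ℝ => m / 2 * t ^ 2) (m * t) t := by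
      have := (hasDerivAt_pow 2 t).const_mul (m / 2)
      exact this.congr_deriv (by push_cast; ring)
    have := ((hg t).sub h2).sub h3
    exact this
  have hkdiff : Differentiable ℝ k := fun t => (hk t).differentiableAt
  have hkmono : MonotoneOn k (Set.Icc 0 1) := by
    apply monotoneOn_of_deriv_nonneg (convex_Icc 0 1) hkdiff.continuous.continuousOn
      hkdiff.differentiableOn
    intro x hx
    rw [interior_Icc] at hx
    rw [(hk x).deriv]
    exact hhnonneg x ⟨hx.1.le, hx.2.le⟩
  have hk01 : k 0 ≤ k 1 :=
    hkmono (Set.left_mem_Icc.2 zero_le_one) (Set.right_mem_Icc.2 zero_le_one) zero_le_one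
  have hφ0 : φ 0 = βstar := by simp [hφdef]
  have hφ1 : φ 1 = βhat := by simp [hφdef, hΔ]
  -- Taylor lower bound
  have hTaylor : L βstar + D 0 + m / 2 ≤ L βhat := by
    have := hk01
    simp only [hkdef, hφ0, hφ1] at this
    nlinarith [this]
  -- gradient bound : |D 0| ≤ lam/2 * (a+b)
  have hDelta_eq : Δ = ∑ i, Δ i • (Pi.single i 1 : Fin d → ℝ) := by
    have : ∑ i, Δ i • (Pi.single i 1 : Fin d → ℝ) = ∑ i, Pi.single i (Δ i) := by
      refine Finset.sum_congr rfl fun i _ => ?_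
      ext j
      simp [Pi.single_apply]
    rw [this, Finset.univ_sum_single]
  have hD0 : |D 0| ≤ lam / 2 * (a + b) := by
    have h1 : D 0 = ∑ i, Δ i * fderiv ℝ L βstar (Pi.single i 1) := by
      rw [hDdef]
      simp only [hφ0]
      conv_lhs => rw [hDelta_eq]
      rw [map_sum]
      simp [smul_eq_mul]
    rw [h1]
    calc |∑ i, Δ i * fderiv ℝ L βstar (Pi.single i 1)|
        ≤ ∑ i, |Δ i * fderiv ℝ L βstar (Pi.single i 1)| := Finset.abs_sum_le_sum_abs _ _
      _ ≤ ∑ i, |Δ i| * (lam / 2) := by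
          refine Finset.sum_le_sum fun i _ => ?_
          rw [abs_mul]
          exact mul_le_mul_of_nonneg_left (hgrad i) (abs_nonneg _)
      _ = lam / 2 * (a + b) := by
          rw [← hT]
          simp only [hΔ, Pi.sub_apply]
          rw [← Finset.sum_mul]
          ring
  -- basic inequality + support bound
  have hnorm : ∑ i, |βstar i| - ∑ i, |βhat i| ≤ a - b := by
    have e1 : ∀ x : Fin d → ℝ, ∑ i, |x i| = ∑ i ∈ S, |x i| + ∑ i ∈ Sᶜ, |x i| := by
      intro x; rw [Finset.sum_add_sum_compl]
    rw [e1 βstar, e1 βhat]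
    have h1 : ∑ i ∈ S, |βstar i| - ∑ i ∈ S, |βhat i| ≤ a := by
      rw [ha_def, ← Finset.sum_sub_distrib]
      refine Finset.sum_le_sum fun i _ => ?_
      have := abs_sub_abs_le_abs_sub (βstar i) (βhat i)
      rw [abs_sub_comm] at this
      linarith
    have h2 : ∑ i ∈ Sᶜ, |βstar i| - ∑ i ∈ Sᶜ, |βhat i| = -b := by
      have : ∑ i ∈ Sᶜ, |βstar i| = 0 := by
        refine Finset.sum_eq_zero fun i hi => ?_
        rw [hsupp i (Finset.mem_compl.mp hi), abs_zero]
      rw [this, hb_def]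
      rw [zero_sub, neg_inj]
      refine Finset.sum_congr rfl fun i hi => ?_
      rw [hsupp i (Finset.mem_compl.mp hi), sub_zero]
    linarith
  have hbasic : L βhat - L βstar ≤ lam * (a - b) := by
    have := hmin βstar
    nlinarith [hnorm]
  -- key inequality
  have hkey : m / 2 ≤ lam * (a - b) + lam / 2 * (a + b) := by
    have h1 : -(lam / 2 * (a + b)) ≤ D 0 := neg_le_of_abs_le hD0
    linarith
  -- clear denominator
  have hK2 : c * κ * a ^ 2 ≤ s * (6 * lam * a - 2 * lam * b) := by
    have h1 : m = c * κ * a ^ 2 / (2 * s) := by rw [hm_def]; ring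
    rw [h1] at hkey
    rw [div_div, div_le_iff₀ (by positivity : (0:ℝ) < 2 * ↑s * 2)] at hkey
    have he : (lam * (a - b) + lam / 2 * (a + b)) * (2 * ↑s * 2)
        = ↑s * (6 * lam * a - 2 * lam * b) := by ring
    linarith [hkey, he]
  have hcone : b ≤ 3 * a := by
    nlinarith [hK2, mul_pos hs0 hlam, mul_nonneg hcκ.le (sq_nonneg a)]
  rw [hT, le_div_iff₀ hcκ]
  rcases ha.eq_or_lt with h0 | hpos
  · have hb0 : b = 0 := le_antisymm (by linarith) hb
    rw [← h0, hb0]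
    nlinarith [mul_pos hs0 hlam]
  · have h1 : c * κ * a ≤ 6 * ↑s * lam := by
      have h2 : c * κ * a * a ≤ 6 * ↑s * lam * a := by
        nlinarith [hK2, mul_nonneg (mul_nonneg hs0.le hlam.le) hb]
      exact le_of_mul_le_mul_right h2 hpos
    nlinarith [h1, hcone, hcκ, mul_pos hs0 hlam,
      mul_le_mul_of_nonneg_right hcone hcκ.le, ha]
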